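/- Let D be a strongly connected digraph with girth g, and let k and p be integers with k ≥ g − 1 ≥ p ≥ 1. Set k̂ = ⌈k/p⌉·p. If for every integer r with −p + 2 ≤ r ≤ p the digraph D has no directed cycle whose length is congruent to r modulo k̂, then χ_A(D) ≤ ⌈k/p⌉. -/

import Mathlib

/-!
A digraph on a finite vertex type `V` is given by its arc relation `A : V → V → Prop`,
which is irreflexive (loopless).
-/

/-- `CycleOn A U ℓ` : there is a directed cycle of length `ℓ` (a sequence of `ℓ` distinct
vertices, cyclically consecutive ones joined by arcs) all of whose vertices lie in `U`. -/
def CycleOn {V : Type*} (A : V → V → Prop) (U : Set V) (ℓ : ℕ) : Prop :=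
  2 ≤ ℓ ∧ ∃ u : ZMod ℓ → V, Function.Injective u ∧ (∀ i, u i ∈ U) ∧ ∀ i, A (u i) (u (i + 1))

/-- `HasCycleLen A ℓ` : the digraph has a directed cycle of length `ℓ`. -/
def HasCycleLen {V : Type*} (A : V → V → Prop) (ℓ : ℕ) : Prop :=
  CycleOn A Set.univ ℓ

/-- A set of vertices is acyclic if the induced subdigraph has no directed cycle. -/
def AcyclicSet {V : Type*} (A : V → V → Prop) (U : Set V) : Prop :=
  ∀ ℓ, ¬ CycleOn A U ℓ

/-- The dichromatic number: the least `k` such that the vertices can be colored with `k`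
colors so that every color class is acyclic. -/
noncomputable def dichromatic {V : Type*} (A : V → V → Prop) : ℕ :=
  sInf {k | ∃ c : V → Fin k, ∀ i, AcyclicSet A {v | c v = i}}

/-- Strong connectivity: every vertex is reachable from every other by a directed path. -/
def StronglyConnected {V : Type*} (A : V → V → Prop) : Prop :=
  ∀ u v, Relation.ReflTransGen A u v

section DFS

variable {V : Type*}

/-- Reachability in `A` avoiding the set `X` (all vertices after the start avoid `X`). -/
def ReachAvoid (A : V → V → Prop) (X : Set V) (u v : V) : Prop :=
  Relation.ReflTransGen (fun a b => A a b ∧ b ∉ X) u v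

lemma reachAvoid_not_mem {A : V → V → Prop} {X : Set V} {u v : V}
    (h : ReachAvoid A X u v) (hu : u ∉ X) : v ∉ X := by
  induction h with
  | refl => exact hu
  | tail _ step _ => exact step.2

lemma rtg_exists_chain {T : V → V → Prop} {v w : V} (h : Relation.ReflTransGen T v w) :
    ∃ (m : ℕ) (f : ℕ → V), f 0 = v ∧ f m = w ∧ ∀ j, j < m → T (f j) (f (j + 1)) := by
  induction h with
  | refl => exact ⟨0, fun _ => v, rfl, rfl, by omega⟩
  | @tail b c hb step ih =>
    obtain ⟨m, f, h0, hm, hstep⟩ := ih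
    refine ⟨m + 1, fun j => if j ≤ m then f j else c, by simp [h0], by simp, ?_⟩
    intro j hj
    by_cases hjm : j < m
    · simpa [Nat.le_of_lt hjm, Nat.succ_le_of_lt hjm] using hstep j hjm
    · have hjeq : j = m := by omega
      subst hjeq
      simpa [hm] using step

lemma cycle_of_chain (A : V → V → Prop) (f : ℕ → V) (m : ℕ) (hm : 1 ≤ m)
    (hinj : ∀ j j', j ≤ m → j' ≤ m → f j = f j' → j = j')
    (harc : ∀ j, j < m → A (f j) (f (j + 1)))
    (hclose : A (f m) (f 0)) : HasCycleLen A (m + 1) := by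
  haveI : NeZero (m + 1) := ⟨by omega⟩
  haveI : Fact (1 < m + 1) := ⟨by omega⟩
  refine ⟨by omega, fun i => f i.val, ?_, fun _ => Set.mem_univ _, ?_⟩
  · intro a b hab
    have ha := ZMod.val_lt a
    have hb := ZMod.val_lt b
    exact ZMod.val_injective _ (hinj _ _ (by omega) (by omega) hab)
  · intro i
    have hlt : i.val < m + 1 := ZMod.val_lt i
    have hv : (i + 1).val = (i.val + 1) % (m + 1) := by
      rw [ZMod.val_add, ZMod.val_one]
    show A (f i.val) (f ((i + 1).val))
    by_cases h : i.val = m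
    · have h0 : (i + 1).val = 0 := by rw [hv, h]; simp
      rw [h0, h]
      exact hclose
    · have h1 : (i + 1).val = i.val + 1 := by rw [hv]; rw [Nat.mod_eq_of_lt (by omega)]
      rw [h1]
      exact harc _ (by omega)

/-- Existence of a DFS forest (tree rooted at `r` spanning everything reachable from `r`
avoiding `X`), with a depth function, such that every cycle within the reachable set has
a "back arc". -/
lemma dfs_exists [Fintype V] (A : V → V → Prop) (hirr : Irreflexive A) :
    ∀ (n : ℕ) (X : Set V) (r : V), r ∉ X → Xᶜ.ncard ≤ n → ∀ d₀ : ℕ,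
    ∃ (T : V → V → Prop) (dep : V → ℕ),
      (∀ x y, T x y → A x y ∧ ReachAvoid A X r x ∧ ReachAvoid A X r y ∧ dep y = dep x + 1) ∧
      (∀ v, ReachAvoid A X r v → Relation.ReflTransGen T r v) ∧
      dep r = d₀ ∧
      (∀ (ℓ : ℕ) (u : ZMod ℓ → V), 2 ≤ ℓ → Function.Injective u →
        (∀ i, ReachAvoid A X r (u i)) → (∀ i, A (u i) (u (i + 1))) →
        ∃ i, Relation.ReflTransGen T (u (i + 1)) (u i)) := by
  intro n
  induction n with
  | zero =>
    intro X r hrX hcard d₀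
    exfalso
    have h1 : 0 < Xᶜ.ncard := (Set.ncard_pos (Set.toFinite _)).mpr ⟨r, hrX⟩
    omega
  | succ n ih =>
    intro X r hrX hcard d₀
    by_cases hc : ∃ c, A r c ∧ c ∉ X
    · obtain ⟨c, hrc, hcX⟩ := hc
      have hcr : c ≠ r := fun h => hirr r (h ▸ hrc)
      have hXr : c ∉ X ∪ {r} := by simp [hcX, hcr]
      have hrmem : r ∈ Xᶜ := hrX
      have hcmem : c ∈ Xᶜ := hcX
      have hcard1 : ((X ∪ {r}) : Set V)ᶜ.ncard ≤ n := by
        have : ((X ∪ {r}) : Set V)ᶜ = Xᶜ \ {r} := by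
          rw [Set.compl_union]; rfl
        rw [this, Set.ncard_diff_singleton_of_mem hrmem]
        omega
      obtain ⟨T₁, dep₁, hT₁, h3₁, h4₁, h5₁⟩ := ih (X ∪ {r}) c hXr hcard1 (d₀ + 1)
      set N₁ : Set V := {v | ReachAvoid A (X ∪ {r}) c v} with hN₁def
      have memN₁ : ∀ v ∈ N₁, v ∉ X ∪ {r} := fun v hv => reachAvoid_not_mem hv hXr
      have hrN₁ : r ∉ N₁ := fun h => memN₁ r h (by simp)
      have hrXN : r ∉ X ∪ N₁ := by simp [hrX, hrN₁]
      have hcard2 : ((X ∪ N₁) : Set V)ᶜ.ncard ≤ n := by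
        have hsub : ((X ∪ N₁) : Set V)ᶜ ⊆ Xᶜ \ {c} := by
          intro x hx
          simp only [Set.mem_compl_iff, Set.mem_union] at hx
          push_neg at hx
          refine ⟨hx.1, ?_⟩
          intro hxc
          exact hx.2 (hxc ▸ Relation.ReflTransGen.refl)
        calc ((X ∪ N₁) : Set V)ᶜ.ncard ≤ (Xᶜ \ {c}).ncard :=
              Set.ncard_le_ncard hsub (Set.toFinite _)
          _ = Xᶜ.ncard - 1 := Set.ncard_diff_singleton_of_mem hcmem
          _ ≤ n := by omega
      obtain ⟨T₂, dep₂, hT₂, h3₂, h4₂, h5₂⟩ := ih (X ∪ N₁) r hrXN hcard2 d₀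
      set N₂ : Set V := {v | ReachAvoid A (X ∪ N₁) r v} with hN₂def
      have memN₂ : ∀ v ∈ N₂, v ∉ X ∪ N₁ := fun v hv => reachAvoid_not_mem hv hrXN
      -- F1
      have F1 : ∀ v ∈ N₁, ReachAvoid A X r v := by
        intro v hv
        exact Relation.ReflTransGen.trans (Relation.ReflTransGen.single ⟨hrc, hcX⟩)
          (Relation.ReflTransGen.mono (fun a b h => ⟨h.1, fun hb => h.2 (Or.inl hb)⟩) _ _ hv)
      have F2 : ∀ v ∈ N₂, ReachAvoid A X r v := by
        intro v hv
        exact Relation.ReflTransGen.mono (fun a b h => ⟨h.1, fun hb => h.2 (Or.inl hb)⟩) _ _ hv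
      have F4 : ∀ v, ReachAvoid A X r v → v ∈ N₁ ∨ v ∈ N₂ := by
        intro v hv
        induction hv with
        | refl => exact Or.inr Relation.ReflTransGen.refl
        | @tail b v' hb step ihb =>
          rcases ihb with hbN₁ | hbN₂
          · by_cases hv'r : v' = r
            · exact Or.inr (hv'r ▸ Relation.ReflTransGen.refl)
            · exact Or.inl (Relation.ReflTransGen.tail hbN₁
                ⟨step.1, by simp [step.2, hv'r]⟩)
          · by_cases hv'N₁ : v' ∈ N₁
            · exact Or.inl hv'N₁
            · exact Or.inr (Relation.ReflTransGen.tail hbN₂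
                ⟨step.1, by simp [step.2, hv'N₁]⟩)
      classical
      refine ⟨fun x y => T₁ x y ∨ T₂ x y ∨ (x = r ∧ y = c),
        fun v => if v ∈ N₁ then dep₁ v else dep₂ v, ?_, ?_, ?_, ?_⟩
      · -- h_T
        rintro x y (h | h | hrc')
        · obtain ⟨ha, hx, hy, hd⟩ := hT₁ x y h
          have hx' : x ∈ N₁ := hx
          have hy' : y ∈ N₁ := hy
          refine ⟨ha, F1 _ hx, F1 _ hy, ?_⟩
          show (if y ∈ N₁ then dep₁ y else dep₂ y) = (if x ∈ N₁ then dep₁ x else dep₂ x) + 1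
          rw [if_pos hx', if_pos hy']
          exact hd
        · obtain ⟨ha, hx, hy, hd⟩ := hT₂ x y h
          have hx' : x ∉ N₁ := fun hh => memN₂ x hx (Or.inr hh)
          have hy' : y ∉ N₁ := fun hh => memN₂ y hy (Or.inr hh)
          refine ⟨ha, F2 _ hx, F2 _ hy, ?_⟩
          show (if y ∈ N₁ then dep₁ y else dep₂ y) = (if x ∈ N₁ then dep₁ x else dep₂ x) + 1
          rw [if_neg hx', if_neg hy']
          exact hd
        · obtain ⟨hxr, hyc⟩ := hrc'
          subst hxr
          subst hyc
          have hcN₁ : y ∈ N₁ := Relation.ReflTransGen.refl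
          refine ⟨hrc, Relation.ReflTransGen.refl, F1 _ hcN₁, ?_⟩
          show (if y ∈ N₁ then dep₁ y else dep₂ y) = (if x ∈ N₁ then dep₁ x else dep₂ x) + 1
          rw [if_pos hcN₁, if_neg hrN₁, h4₁, h4₂]
      · -- h3
        intro v hv
        rcases F4 v hv with hvN₁ | hvN₂
        · exact Relation.ReflTransGen.trans
            (Relation.ReflTransGen.single (Or.inr (Or.inr ⟨rfl, rfl⟩)))
            (Relation.ReflTransGen.mono (fun a b h => Or.inl h) _ _ (h3₁ v hvN₁))
        · exact Relation.ReflTransGen.mono (fun a b h => Or.inr (Or.inl h)) _ _ (h3₂ v hvN₂)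
      · -- h4
        show (if r ∈ N₁ then dep₁ r else dep₂ r) = d₀
        rw [if_neg hrN₁]
        exact h4₂
      · -- h5
        intro ℓ u hℓ hinj hmem harc
        haveI : NeZero ℓ := ⟨by omega⟩
        by_cases hru : ∃ i₀, u i₀ = r
        · obtain ⟨i₀, hi₀⟩ := hru
          refine ⟨i₀ - 1, ?_⟩
          have he : i₀ - 1 + 1 = i₀ := by ring
          rw [he, hi₀]
          rcases F4 _ (hmem (i₀ - 1)) with hN | hN
          · exact Relation.ReflTransGen.trans
              (Relation.ReflTransGen.single (Or.inr (Or.inr ⟨rfl, rfl⟩)))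
              (Relation.ReflTransGen.mono (fun a b h => Or.inl h) _ _ (h3₁ _ hN))
          · exact Relation.ReflTransGen.mono (fun a b h => Or.inr (Or.inl h)) _ _ (h3₂ _ hN)
        · push_neg at hru
          by_cases hN : ∃ i₀, u i₀ ∈ N₁
          · obtain ⟨i₀, h0⟩ := hN
            have hall : ∀ m : ℕ, u (i₀ + (m : ZMod ℓ)) ∈ N₁ := by
              intro m
              induction m with
              | zero => simpa using h0
              | succ m ihm =>
                have harc' : A (u (i₀ + (m : ZMod ℓ))) (u (i₀ + (m : ZMod ℓ) + 1)) := harc _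
                have hnx : u (i₀ + (m : ZMod ℓ) + 1) ∉ X :=
                  reachAvoid_not_mem (hmem (i₀ + (m : ZMod ℓ) + 1)) hrX
                have hnr : u (i₀ + (m : ZMod ℓ) + 1) ≠ r := hru _
                have hstep := Relation.ReflTransGen.tail ihm
                  (⟨harc', by simp [hnx, hnr]⟩ :
                    A (u (i₀ + (m : ZMod ℓ))) (u (i₀ + (m : ZMod ℓ) + 1)) ∧
                    u (i₀ + (m : ZMod ℓ) + 1) ∉ X ∪ {r})
                have hcast : ((m + 1 : ℕ) : ZMod ℓ) = (m : ZMod ℓ) + 1 := by push_cast; ring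
                rw [hcast, ← add_assoc]
                exact hstep
            have hall' : ∀ i, u i ∈ N₁ := by
              intro i
              have h1 := hall (i - i₀).val
              have h2 : ((ZMod.val (i - i₀) : ℕ) : ZMod ℓ) = i - i₀ := by
                simp [ZMod.natCast_val, ZMod.cast_id]
              rw [h2] at h1
              have h3 : i₀ + (i - i₀) = i := by ring
              rwa [h3] at h1
            obtain ⟨i, hi⟩ := h5₁ ℓ u hℓ hinj hall' harc
            exact ⟨i, Relation.ReflTransGen.mono (fun a b h => Or.inl h) _ _ hi⟩
          · push_neg at hN
            have hall₂ : ∀ i, u i ∈ N₂ := fun i => (F4 _ (hmem i)).resolve_left (hN i)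
            obtain ⟨i, hi⟩ := h5₂ ℓ u hℓ hinj hall₂ harc
            exact ⟨i, Relation.ReflTransGen.mono (fun a b h => Or.inr (Or.inl h)) _ _ hi⟩
    · -- no out-neighbour outside X : r is a leaf
      push_neg at hc
      have hsingle : ∀ v, ReachAvoid A X r v → v = r := by
        intro v hv
        induction hv with
        | refl => rfl
        | @tail b v' hb step ihb =>
          exfalso
          exact step.2 (hc _ (ihb ▸ step.1))
      refine ⟨fun _ _ => False, fun _ => d₀, fun x y h => h.elim, ?_, rfl, ?_⟩
      · intro v hv
        rw [hsingle v hv]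
      · intro ℓ u hℓ hinj hmem harc
        exfalso
        haveI : Fact (1 < ℓ) := ⟨by omega⟩
        have h0 : u 0 = r := hsingle _ (hmem 0)
        have h1 : u 1 = r := hsingle _ (hmem 1)
        exact one_ne_zero (hinj (h1.trans h0.symm))

end DFS

theorem stmt_1 {V : Type*} [Fintype V] (A : V → V → Prop) (hloopless : Irreflexive A)
    (hsc : StronglyConnected A)
    (g : ℕ) (hg : HasCycleLen A g) (hgmin : ∀ ℓ, HasCycleLen A ℓ → g ≤ ℓ)
    (k p : ℕ) (hp1 : 1 ≤ p) (hpg : p ≤ g - 1) (hgk : g - 1 ≤ k)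
    (khat : ℕ) (hkhat : khat = ⌈(k : ℚ) / (p : ℚ)⌉₊ * p)
    (hnc : ∀ r : ℤ, -(p : ℤ) + 2 ≤ r → r ≤ (p : ℤ) →
      ∀ ℓ, HasCycleLen A ℓ → ¬ ((ℓ : ℤ) ≡ r [ZMOD (khat : ℤ)])) :
    dichromatic A ≤ ⌈(k : ℚ) / (p : ℚ)⌉₊ := by
  classical
  set q := ⌈(k : ℚ) / (p : ℚ)⌉₊ with hq
  obtain ⟨hg2, u₀, -⟩ := hg
  have hk1 : 1 ≤ k := by omega
  have hq1 : 1 ≤ q := by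
    rw [hq, Nat.one_le_ceil_iff]
    exact div_pos (by exact_mod_cast hk1) (by exact_mod_cast hp1)
  have hkh0 : 0 < khat := by rw [hkhat]; exact Nat.mul_pos hq1 hp1
  set r₀ := u₀ 0 with hr₀
  obtain ⟨T, dep, hT, h3, -, h5⟩ := dfs_exists A hloopless (Set.ncard ((∅ : Set V)ᶜ))
    ∅ r₀ (by simp) le_rfl 0
  have hNuniv : ∀ v, ReachAvoid A ∅ r₀ v := fun v =>
    Relation.ReflTransGen.mono (fun a b h => ⟨h, by simp⟩) _ _ (hsc r₀ v)
  set col : V → Fin q := fun v => ⟨(dep v % khat) / p, by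
    have h1 : dep v % khat < khat := Nat.mod_lt _ hkh0
    rw [Nat.div_lt_iff_lt_mul hp1, ← hkhat]
    exact h1⟩ with hcol
  refine Nat.sInf_le ⟨col, ?_⟩
  intro i ℓ hcyc
  obtain ⟨hℓ2, u, huinj, humem, huarc⟩ := hcyc
  haveI : NeZero ℓ := ⟨by omega⟩
  obtain ⟨j, hj⟩ := h5 ℓ u hℓ2 huinj (fun i' => hNuniv _) huarc
  obtain ⟨m, f, hf0, hfm, hfstep⟩ := rtg_exists_chain hj
  have hdep : ∀ j', j' ≤ m → dep (f j') = dep (u (j + 1)) + j' := by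
    intro j'
    induction j' with
    | zero => intro _; simp [hf0]
    | succ j' ihj =>
      intro hle
      have hstep := (hT _ _ (hfstep j' (by omega))).2.2.2
      rw [hstep, ihj (by omega)]
      omega
  have hvw : u (j + 1) ≠ u j := by
    intro h
    have h2 := huinj h
    haveI : Fact (1 < ℓ) := ⟨by omega⟩
    have h10 : (1 : ZMod ℓ) = 0 := by
      have h3 := congrArg (fun x => x - j) h2
      simpa using h3
    exact one_ne_zero h10
  have hm1 : 1 ≤ m := by
    rcases Nat.eq_zero_or_pos m with h | h
    · exfalso; apply hvw; rw [← hf0, ← hfm, h]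
    · exact h
  have hdwv : dep (u j) = dep (u (j + 1)) + m := by rw [← hfm]; exact hdep m le_rfl
  have hcyclen : HasCycleLen A (m + 1) := by
    apply cycle_of_chain A f m hm1
    · intro a b ha hb he
      have h1 := hdep a ha
      have h2 := hdep b hb
      rw [he] at h1
      omega
    · exact fun j' hj' => (hT _ _ (hfstep j' hj')).1
    · rw [hfm, hf0]; exact huarc j
  set s := dep (u j) % khat with hs
  set t := dep (u (j + 1)) % khat with ht
  have hceq : t / p = s / p := by
    have h1 : col (u (j + 1)) = i := humem (j + 1)
    have h2 : col (u j) = i := humem j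
    exact congrArg Fin.val (h1.trans h2.symm)
  have hsp : s % p < p := Nat.mod_lt _ hp1
  have htp : t % p < p := Nat.mod_lt _ hp1
  have hmod : ((m + 1 : ℕ) : ℤ) ≡ ((s % p : ℕ) : ℤ) - ((t % p : ℕ) : ℤ) + 1 [ZMOD (khat : ℤ)] := by
    refine Int.modEq_iff_dvd.mpr
      ⟨((dep (u (j + 1)) / khat : ℕ) : ℤ) - ((dep (u j) / khat : ℕ) : ℤ), ?_⟩
    have E1 : (khat : ℤ) * ((dep (u j) / khat : ℕ) : ℤ) + ((s : ℕ) : ℤ) = (dep (u j) : ℤ) := by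
      exact_mod_cast Nat.div_add_mod (dep (u j)) khat
    have E2 : (khat : ℤ) * ((dep (u (j + 1)) / khat : ℕ) : ℤ) + ((t : ℕ) : ℤ)
        = (dep (u (j + 1)) : ℤ) := by
      exact_mod_cast Nat.div_add_mod (dep (u (j + 1))) khat
    have E3 : (p : ℤ) * ((s / p : ℕ) : ℤ) + ((s % p : ℕ) : ℤ) = ((s : ℕ) : ℤ) := by
      exact_mod_cast Nat.div_add_mod s p
    have E4 : (p : ℤ) * ((t / p : ℕ) : ℤ) + ((t % p : ℕ) : ℤ) = ((t : ℕ) : ℤ) := by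
      exact_mod_cast Nat.div_add_mod t p
    have E5 : ((t / p : ℕ) : ℤ) = ((s / p : ℕ) : ℤ) := by exact_mod_cast hceq
    have E6 : (dep (u j) : ℤ) = (dep (u (j + 1)) : ℤ) + (m : ℤ) := by exact_mod_cast hdwv
    rw [Nat.cast_add, Nat.cast_one]
    linear_combination E1 - E2 + E3 - E4 + (p : ℤ) * E5 + E6
  exact hnc (((s % p : ℕ) : ℤ) - ((t % p : ℕ) : ℤ) + 1) (by omega) (by omega) (m + 1)
    hcyclen hmod
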